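/- If a set of more than 24 nonzero vectors in ℝ² all have norms within a factor 2 of each other (every norm lies in [m, 2m] for some m > 0), then there exist two of them, say a and b, with ‖a‖ ≤ ‖b‖ ≤ √2·‖a‖ and the angle between a and b at most 2π/13. -/

import Mathlib

open Real

/-- The representative of a real angle has absolute value at most that of the real number. -/
lemma aux_abs_toReal_coe_le (r : ℝ) : |((r : Real.Angle)).toReal| ≤ |r| := by
  rcases lt_or_ge π |r| with h | h
  · have h1 := Real.Angle.toReal_mem_Ioc (r : Real.Angle)
    have := abs_le.2 ⟨le_of_lt h1.1, h1.2⟩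
    linarith
  · rcases abs_le.1 h with ⟨h1, h2⟩
    rcases eq_or_lt_of_le h1 with h3 | h3
    · rw [← h3]
      have : ((-π : ℝ) : Real.Angle) = ((π : ℝ) : Real.Angle) := by
        rw [Real.Angle.angle_eq_iff_two_pi_dvd_sub]
        exact ⟨-1, by push_cast; ring⟩
      rw [this, Real.Angle.toReal_coe_eq_self_iff.2 ⟨by linarith [Real.pi_pos], le_refl π⟩]
      rw [abs_neg]
    · rw [Real.Angle.toReal_coe_eq_self_iff.2 ⟨h3, h2⟩]

/-- Pigeonhole on sorted gaps: among 13 reals, two are within 2π/13 of each other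
either directly or modulo 2π. -/
lemma aux_gap (T : Finset ℝ) (hT : T.card = 13) :
    ∃ u ∈ T, ∃ v ∈ T, u < v ∧ (v - u ≤ 2 * π / 13 ∨ 2 * π - (v - u) ≤ 2 * π / 13) := by
  by_contra hcon
  push_neg at hcon
  set g := 2 * π / 13 with hg
  let f := T.orderIsoOfFin hT
  let F : ℕ → ℝ := fun k => if h : k < 13 then (f ⟨k, h⟩ : ℝ) else 0
  have hFmem : ∀ k, k < 13 → F k ∈ T := by
    intro k hk
    simp only [F, dif_pos hk]
    exact (f ⟨k, hk⟩).2
  have hFlt : ∀ j k, j < k → k < 13 → F j < F k := by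
    intro j k hjk hk
    have hj : j < 13 := lt_trans hjk hk
    simp only [F, dif_pos hj, dif_pos hk]
    exact_mod_cast f.strictMono (show (⟨j, hj⟩ : Fin 13) < ⟨k, hk⟩ from hjk)
  have hgap : ∀ n, n + 1 < 13 → g < F (n + 1) - F n := by
    intro n hn
    exact (hcon _ (hFmem n (Nat.lt_of_succ_lt hn)) _ (hFmem (n + 1) hn)
      (hFlt n (n + 1) (Nat.lt_succ_self n) hn)).1
  have key : ∀ k : ℕ, k < 13 → (k : ℝ) * g ≤ F k - F 0 := by
    intro k
    induction k with
    | zero => intro _; simp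
    | succ n ih =>
      intro hk
      have h1 := hgap n hk
      have h2 := ih (Nat.lt_of_succ_lt hk)
      push_cast
      linarith
  have h12 := key 12 (by norm_num)
  have hwrap := (hcon _ (hFmem 0 (by norm_num)) _ (hFmem 12 (by norm_num))
    (hFlt 0 12 (by norm_num) (by norm_num))).2
  have hpi := Real.pi_pos
  rw [hg] at h12 hwrap
  push_cast at h12
  linarith

theorem stmt11 (s : Finset (EuclideanSpace ℝ (Fin 2))) (m : ℝ) (hm : 0 < m)
    (hcard : 24 < s.card)
    (hne : ∀ a ∈ s, a ≠ 0)
    (hnorm : ∀ a ∈ s, m ≤ ‖a‖ ∧ ‖a‖ ≤ 2 * m) :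
    ∃ a ∈ s, ∃ b ∈ s, a ≠ b ∧ ‖a‖ ≤ ‖b‖ ∧ ‖b‖ ≤ Real.sqrt 2 * ‖a‖ ∧
      InnerProductGeometry.angle a b ≤ 2 * π / 13 := by
  classical
  haveI : Fact (Module.finrank ℝ (EuclideanSpace ℝ (Fin 2)) = 2) := ⟨finrank_euclideanSpace_fin⟩
  set o : Orientation ℝ (EuclideanSpace ℝ (Fin 2)) (Fin 2) :=
    (EuclideanSpace.basisFun (Fin 2) ℝ).toBasis.orientation with ho
  set e : EuclideanSpace ℝ (Fin 2) := EuclideanSpace.single 0 1 with hee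
  have he : e ≠ 0 := by
    intro h
    have := congrArg (fun v : EuclideanSpace ℝ (Fin 2) => v 0) h
    simp [hee, EuclideanSpace.single_apply] at this
  set θ : EuclideanSpace ℝ (Fin 2) → ℝ := fun v => (o.oangle e v).toReal with hθ
  have hpi := Real.pi_pos
  have hsqrt2 : (1 : ℝ) ≤ Real.sqrt 2 := by
    rw [show (1:ℝ) = Real.sqrt 1 by simp]
    exact Real.sqrt_le_sqrt (by norm_num)
  have hsq : Real.sqrt 2 * Real.sqrt 2 = 2 := Real.mul_self_sqrt (by norm_num)
  -- the angle between two nonzero vectors in terms of θ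
  have hangle : ∀ a b : EuclideanSpace ℝ (Fin 2), a ≠ 0 → b ≠ 0 →
      InnerProductGeometry.angle a b = |(((θ b - θ a : ℝ) : Real.Angle)).toReal| := by
    intro a b ha hb
    rw [o.angle_eq_abs_oangle_toReal ha hb]
    congr 2
    have h1 : o.oangle a e + o.oangle e b = o.oangle a b := o.oangle_add ha he hb
    have h2 : o.oangle a e = -o.oangle e a := o.oangle_rev e a
    have h3 : ((θ b - θ a : ℝ) : Real.Angle)
        = ((θ b : ℝ) : Real.Angle) - ((θ a : ℝ) : Real.Angle) := by
      rw [Real.Angle.coe_sub]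
    rw [h3, hθ]
    simp only [Real.Angle.coe_toReal]
    rw [← h1, h2]
    abel
  -- key: from a pair with small angular distance we get the conclusion for that pair
  have hangle_le : ∀ a b : EuclideanSpace ℝ (Fin 2), a ≠ 0 → b ≠ 0 →
      (|θ b - θ a| ≤ 2 * π / 13 ∨ |θ b - θ a + 2 * π| ≤ 2 * π / 13) →
      InnerProductGeometry.angle a b ≤ 2 * π / 13 := by
    intro a b ha hb h
    rw [hangle a b ha hb]
    rcases h with h | h
    · exact le_trans (aux_abs_toReal_coe_le _) h
    · have : ((θ b - θ a : ℝ) : Real.Angle) = ((θ b - θ a + 2 * π : ℝ) : Real.Angle) := by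
        rw [Real.Angle.angle_eq_iff_two_pi_dvd_sub]
        exact ⟨-1, by push_cast; ring⟩
      rw [this]
      exact le_trans (aux_abs_toReal_coe_le _) h
  -- split by norm classes
  set t1 : Finset (EuclideanSpace ℝ (Fin 2)) := s.filter (fun v => ‖v‖ ≤ Real.sqrt 2 * m) with ht1
  set t2 : Finset (EuclideanSpace ℝ (Fin 2)) := s.filter (fun v => ¬ ‖v‖ ≤ Real.sqrt 2 * m) with ht2
  have hsplit : t1.card + t2.card = s.card := Finset.card_filter_add_card_filter_not _
  have hone : 13 ≤ t1.card ∨ 13 ≤ t2.card := by omega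
  obtain ⟨t, hts, htc, hratio⟩ :
      ∃ t : Finset (EuclideanSpace ℝ (Fin 2)), t ⊆ s ∧ 13 ≤ t.card ∧
        (∀ a ∈ t, ∀ b ∈ t, ‖a‖ ≤ ‖b‖ → ‖b‖ ≤ Real.sqrt 2 * ‖a‖) := by
    rcases hone with h | h
    · refine ⟨t1, Finset.filter_subset _ _, h, ?_⟩
      intro a ha b hb _
      rw [ht1, Finset.mem_filter] at ha hb
      have hma := (hnorm a ha.1).1
      calc ‖b‖ ≤ Real.sqrt 2 * m := hb.2
        _ ≤ Real.sqrt 2 * ‖a‖ := by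
            apply mul_le_mul_of_nonneg_left hma (by positivity)
    · refine ⟨t2, Finset.filter_subset _ _, h, ?_⟩
      intro a ha b hb _
      rw [ht2, Finset.mem_filter] at ha hb
      have hma : Real.sqrt 2 * m ≤ ‖a‖ := le_of_not_ge ha.2
      calc ‖b‖ ≤ 2 * m := (hnorm b hb.1).2
        _ = Real.sqrt 2 * (Real.sqrt 2 * m) := by rw [← mul_assoc, hsq]
        _ ≤ Real.sqrt 2 * ‖a‖ := by
            apply mul_le_mul_of_nonneg_left hma (by positivity)
  -- suffices to find a small-angle pair in t
  suffices h : ∃ a ∈ t, ∃ b ∈ t, a ≠ b ∧ InnerProductGeometry.angle a b ≤ 2 * π / 13 by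
    obtain ⟨a, ha, b, hb, hab, hang⟩ := h
    rcases le_total ‖a‖ ‖b‖ with hle | hle
    · exact ⟨a, hts ha, b, hts hb, hab, hle, hratio a ha b hb hle, hang⟩
    · exact ⟨b, hts hb, a, hts ha, hab.symm, hle, hratio b hb a ha hle,
        (InnerProductGeometry.angle_comm a b ▸ hang)⟩
  -- case split on injectivity of θ on t
  by_cases hinj : ∃ a ∈ t, ∃ b ∈ t, a ≠ b ∧ θ a = θ b
  · obtain ⟨a, ha, b, hb, hab, hθab⟩ := hinj
    refine ⟨a, ha, b, hb, hab, ?_⟩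
    apply hangle_le a b (hne a (hts ha)) (hne b (hts hb))
    left
    rw [hθab, sub_self, abs_zero]
    positivity
  · push_neg at hinj
    -- θ is injective on t; take 13 elements and apply the gap lemma
    obtain ⟨t', ht't, ht'c⟩ := Finset.exists_subset_card_eq htc
    have hinj' : ∀ a ∈ t', ∀ b ∈ t', θ a = θ b → a = b := by
      intro a ha b hb hab
      by_contra hne'
      exact hinj a (ht't ha) b (ht't hb) hne' hab
    set T : Finset ℝ := t'.image θ with hT
    have hTc : T.card = 13 := by
      rw [hT, Finset.card_image_of_injOn hinj', ht'c]
    obtain ⟨u, hu, v, hv, huv, hcase⟩ := aux_gap T hTc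
    rw [hT, Finset.mem_image] at hu hv
    obtain ⟨b, hbt, hbu⟩ := hu
    obtain ⟨a, hat, hav⟩ := hv
    have hab : a ≠ b := by
      intro h
      subst h
      exact (ne_of_lt huv) (hbu.symm.trans hav)
    refine ⟨a, ht't hat, b, ht't hbt, hab, ?_⟩
    apply hangle_le a b (hne a (hts (ht't hat))) (hne b (hts (ht't hbt)))
    -- θ b = u < v = θ a
    have hIb := Real.Angle.toReal_mem_Ioc (o.oangle e b)
    have hIa := Real.Angle.toReal_mem_Ioc (o.oangle e a)
    rw [hθ] at *
    rcases hcase with h | h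
    · left
      rw [hbu, hav, abs_sub_comm, abs_of_nonneg (by linarith)]
      exact h
    · right
      rw [hbu, hav]
      have hlt : v - u < 2 * π := by
        have h1 : v ≤ π := by rw [← hav]; exact hIa.2
        have h2 : -π < u := by rw [← hbu]; exact hIb.1
        linarith
      rw [abs_of_nonneg (by linarith)]
      linarith
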